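/- With the setup of the previous statement (vᵢ = R eᵢ, u = (R/√d)Σeᵢ, wᵢ = 1/R - d aᵢ/(R√d + dR ā)), fix p ∈ (1, ∞] with dual exponent q, and let λ = (r/R)(Σᵢ |1/√d + ā - aᵢ|^q)^{1/q}, where r > 0. Then the ℓ_p distance from the point x_i = vᵢ + (aᵢ - λ)u to the hyperplane H = {z : ⟨w, z⟩ = 1} equals exactly r. -/

import Mathlib

open Finset
open scoped ENNReal

private lemma conj_cases (p : ℝ≥0∞) (hp : 1 < p) (q : ℝ) (hq : 1 ≤ q)
    (hpq : 1 / p + 1 / ENNReal.ofReal q = 1) :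
    (p = ∞ ∧ q = 1) ∨ (p ≠ ∞ ∧ Real.HolderConjugate p.toReal q) := by
  have hq0 : (0:ℝ) < q := lt_of_lt_of_le zero_lt_one hq
  rcases eq_or_ne p ∞ with h | h
  · left
    refine ⟨h, ?_⟩
    subst h
    rw [one_div, ENNReal.inv_top, zero_add, one_div, ENNReal.inv_eq_one] at hpq
    exact ENNReal.ofReal_eq_one.mp hpq
  · right
    have hp0 : p ≠ 0 := fun h0 => by simp [h0] at hp
    have h1 : 1 / p ≠ ∞ := by
      rw [one_div]
      exact ENNReal.inv_ne_top.2 hp0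
    have h2 : 1 / ENNReal.ofReal q ≠ ∞ := by
      rw [one_div]
      exact ENNReal.inv_ne_top.2 (ENNReal.ofReal_pos.2 hq0).ne'
    have key := congrArg ENNReal.toReal hpq
    rw [ENNReal.toReal_add h1 h2, ENNReal.toReal_one, one_div, one_div,
      ENNReal.toReal_inv, ENNReal.toReal_inv, ENNReal.toReal_ofReal hq0.le] at key
    refine ⟨h, Real.holderConjugate_iff.2 ⟨?_, key⟩⟩
    have := (ENNReal.toReal_lt_toReal (by simp) h).2 hp
    simpa using this

private lemma coord_le_norm_top {d : ℕ} (y : Fin d → ℝ) (j : Fin d) :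
    |y j| ≤ ‖(WithLp.equiv ⊤ (Fin d → ℝ)).symm y‖ := by
  rw [PiLp.norm_eq_ciSup]
  have h := le_ciSup (f := fun i => ‖((WithLp.equiv ⊤ (Fin d → ℝ)).symm y) i‖)
    (Set.Finite.bddAbove (Set.finite_range _)) j
  simpa [WithLp.equiv_symm_apply, PiLp.toLp_apply, Real.norm_eq_abs] using h

private lemma holder_aux {d : ℕ} (p : ℝ≥0∞) [Fact (1 ≤ p)] (hp : 1 < p) (q : ℝ) (hq : 1 ≤ q)
    (hpq : 1 / p + 1 / ENNReal.ofReal q = 1) (w y : Fin d → ℝ) :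
    ∑ j, w j * y j ≤ (∑ j, |w j| ^ q) ^ (1 / q) * ‖(WithLp.equiv p (Fin d → ℝ)).symm y‖ := by
  rcases conj_cases p hp q hq hpq with ⟨hpt, hq1⟩ | ⟨hpt, hconj⟩
  · subst hpt; subst hq1
    simp only [Real.rpow_one]
    calc ∑ j, w j * y j ≤ ∑ j, |w j| * ‖(WithLp.equiv ⊤ (Fin d → ℝ)).symm y‖ := by
          refine Finset.sum_le_sum fun j _ => ?_
          calc w j * y j ≤ |w j * y j| := le_abs_self _
            _ = |w j| * |y j| := abs_mul _ _
            _ ≤ _ := mul_le_mul_of_nonneg_left (coord_le_norm_top y j) (abs_nonneg _)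
      _ = _ := by rw [← Finset.sum_mul]; norm_num
  · have h0 : 0 < p.toReal := lt_trans zero_lt_one hconj.lt
    rw [PiLp.norm_eq_sum h0]
    have h := Real.inner_le_Lp_mul_Lq (s := Finset.univ) w y hconj.symm
    simpa [WithLp.equiv_symm_apply, PiLp.toLp_apply, Real.norm_eq_abs] using h

private lemma sign_mul_self_eq_abs (x : ℝ) : x * Real.sign x = |x| := by
  rcases lt_trichotomy x 0 with h | h | h
  · rw [Real.sign_of_neg h, abs_of_neg h]; ring
  · simp [h]
  · rw [Real.sign_of_pos h, abs_of_pos h]; ring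

private lemma wy_eq_abs_rpow (q : ℝ) (hq : 1 ≤ q) (x : ℝ) :
    x * (Real.sign x * |x| ^ (q - 1)) = |x| ^ q := by
  have hq0 : (0:ℝ) < q := lt_of_lt_of_le zero_lt_one hq
  rcases eq_or_ne x 0 with h | h
  · simp [h, Real.zero_rpow hq0.ne']
  · have hx : 0 < |x| := abs_pos.2 h
    have : |x| ^ q = |x| ^ ((1:ℝ) + (q - 1)) := by ring_nf
    rw [this, Real.rpow_add hx, Real.rpow_one, ← mul_assoc, sign_mul_self_eq_abs]

private lemma norm_extremal_le {d : ℕ} (hd : 1 ≤ d) (p : ℝ≥0∞) [Fact (1 ≤ p)] (hp : 1 < p)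
    (q : ℝ) (hq : 1 ≤ q) (hpq : 1 / p + 1 / ENNReal.ofReal q = 1) (w : Fin d → ℝ) :
    ‖(WithLp.equiv p (Fin d → ℝ)).symm (fun j => Real.sign (w j) * |w j| ^ (q - 1))‖ ≤
      ((∑ j, |w j| ^ q) ^ (1 / q)) ^ (q - 1) := by
  have hq0 : (0:ℝ) < q := lt_of_lt_of_le zero_lt_one hq
  rcases conj_cases p hp q hq hpq with ⟨hpt, hq1⟩ | ⟨hpt, hconj⟩
  · subst hpt; subst hq1
    haveI : Nonempty (Fin d) := ⟨⟨0, hd⟩⟩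
    simp only [sub_self, Real.rpow_zero, mul_one]
    rw [PiLp.norm_eq_ciSup]
    refine ciSup_le fun j => ?_
    simp only [WithLp.equiv_symm_apply, PiLp.toLp_apply, Real.norm_eq_abs]
    rcases lt_trichotomy (w j) 0 with h | h | h
    · simp [Real.sign_of_neg h]
    · simp [h]
    · simp [Real.sign_of_pos h]
  · have h0 : 0 < p.toReal := lt_trans zero_lt_one hconj.lt
    rw [PiLp.norm_eq_sum h0]
    have key : ∀ j : Fin d, ‖Real.sign (w j) * |w j| ^ (q - 1)‖ ^ p.toReal = |w j| ^ q := by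
      intro j
      rcases eq_or_ne (w j) 0 with h | h
      · simp [h, Real.zero_rpow hq0.ne', Real.zero_rpow h0.ne',
          Real.zero_rpow (show q - 1 ≠ 0 from sub_ne_zero.2 (ne_of_gt hconj.symm.lt))]
      · have hx : 0 < |w j| := abs_pos.2 h
        have hsgn : |Real.sign (w j)| = 1 := by
          rcases lt_trichotomy (w j) 0 with h' | h' | h'
          · simp [Real.sign_of_neg h']
          · exact absurd h' h
          · simp [Real.sign_of_pos h']
        rw [Real.norm_eq_abs, abs_mul, hsgn, one_mul,
          abs_of_nonneg (Real.rpow_nonneg (abs_nonneg _) _), ← Real.rpow_mul (abs_nonneg _),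
          hconj.symm.sub_one_mul_conj]
    simp only [WithLp.equiv_symm_apply, PiLp.toLp_apply, key]
    have hTnn : (0:ℝ) ≤ ∑ j, |w j| ^ q :=
      Finset.sum_nonneg fun j _ => Real.rpow_nonneg (abs_nonneg _) _
    rw [← Real.rpow_mul hTnn]
    refine le_of_eq ?_
    congr 1
    have h1 := hconj.inv_add_inv_eq_one
    have hqne : q ≠ 0 := hq0.ne'
    field_simp
    field_simp at h1
    linarith

private lemma infDist_hyperplane {d : ℕ} (hd : 1 ≤ d) (p : ℝ≥0∞) [Fact (1 ≤ p)] (hp : 1 < p)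
    (q : ℝ) (hq : 1 ≤ q) (hpq : 1 / p + 1 / ENNReal.ofReal q = 1)
    (w x : Fin d → ℝ) (hT : 0 < ∑ j, |w j| ^ q) (hx1 : ∑ j, w j * x j ≤ 1) :
    Metric.infDist ((WithLp.equiv p (Fin d → ℝ)).symm x)
      {z : PiLp p (fun _ : Fin d => ℝ) | ∑ j, w j * (WithLp.equiv p (Fin d → ℝ)) z j = 1}
      = (1 - ∑ j, w j * x j) / (∑ j, |w j| ^ q) ^ (1 / q) := by
  have hq0 : (0:ℝ) < q := lt_of_lt_of_le zero_lt_one hq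
  set T : ℝ := ∑ j, |w j| ^ q with hTdef
  have hW : 0 < T ^ (1/q) := Real.rpow_pos_of_pos hT _
  set y : Fin d → ℝ := fun j => Real.sign (w j) * |w j| ^ (q - 1) with hy
  have hsum_wy : ∑ j, w j * y j = T := by
    rw [hTdef]
    exact Finset.sum_congr rfl fun j _ => wy_eq_abs_rpow q hq (w j)
  set X := (WithLp.equiv p (Fin d → ℝ)).symm x with hX
  set Y := (WithLp.equiv p (Fin d → ℝ)).symm y with hY
  set c : ℝ := (1 - ∑ j, w j * x j) / T with hc
  have hc0 : 0 ≤ c := div_nonneg (by linarith) hT.le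
  set z₀ := X + c • Y with hz₀def
  have hcoord : ∀ j, (WithLp.equiv p (Fin d → ℝ)) z₀ j = x j + c * y j := by
    intro j
    rw [hz₀def, hX, hY]
    simp
  have hz₀ : z₀ ∈ {z : PiLp p (fun _ : Fin d => ℝ) |
      ∑ j, w j * (WithLp.equiv p (Fin d → ℝ)) z j = 1} := by
    simp only [Set.mem_setOf_eq, hcoord]
    have : ∑ j, w j * (x j + c * y j) = (∑ j, w j * x j) + c * ∑ j, w j * y j := by
      rw [Finset.mul_sum]
      rw [← Finset.sum_add_distrib]
      exact Finset.sum_congr rfl fun j _ => by ring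
    rw [this, hsum_wy, hc]
    field_simp
    ring
  have hdist : dist X z₀ ≤ (1 - ∑ j, w j * x j) / T ^ (1/q) := by
    rw [dist_eq_norm]
    have : X - z₀ = -(c • Y) := by rw [hz₀def]; abel
    rw [this, norm_neg, norm_smul, Real.norm_eq_abs, abs_of_nonneg hc0]
    have h1 : ‖Y‖ ≤ (T ^ (1/q)) ^ (q - 1) := by
      rw [hY, hy]
      exact norm_extremal_le hd p hp q hq hpq w
    have h2 : (T ^ (1/q)) ^ (q - 1) = T / T ^ (1/q) := by
      rw [← Real.rpow_mul hT.le, eq_div_iff hW.ne', ← Real.rpow_add hT]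
      norm_num
      have he : q⁻¹ * (q - 1) + q⁻¹ = 1 := by field_simp; ring
      rw [he, Real.rpow_one]
    calc c * ‖Y‖ ≤ c * (T / T ^ (1/q)) := by
          rw [← h2]; exact mul_le_mul_of_nonneg_left h1 hc0
      _ = (1 - ∑ j, w j * x j) / T ^ (1/q) := by
          rw [hc]; field_simp
  have hlow : ∀ z ∈ {z : PiLp p (fun _ : Fin d => ℝ) |
      ∑ j, w j * (WithLp.equiv p (Fin d → ℝ)) z j = 1},
      (1 - ∑ j, w j * x j) / T ^ (1/q) ≤ dist X z := by
    intro z hz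
    simp only [Set.mem_setOf_eq] at hz
    have h1 : ∑ j, w j * ((WithLp.equiv p (Fin d → ℝ)) z j - x j)
        = 1 - ∑ j, w j * x j := by
      have : ∑ j, w j * ((WithLp.equiv p (Fin d → ℝ)) z j - x j)
          = (∑ j, w j * (WithLp.equiv p (Fin d → ℝ)) z j) - ∑ j, w j * x j := by
        rw [← Finset.sum_sub_distrib]
        exact Finset.sum_congr rfl fun j _ => by ring
      rw [this, hz]
    have h2 := holder_aux p hp q hq hpq w
      (fun j => (WithLp.equiv p (Fin d → ℝ)) z j - x j)
    rw [h1] at h2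
    have h3 : (WithLp.equiv p (Fin d → ℝ)).symm
        (fun j => (WithLp.equiv p (Fin d → ℝ)) z j - x j) = z - X := by
      rw [hX]
      apply (WithLp.equiv p (Fin d → ℝ)).injective
      ext j
      simp
    rw [h3] at h2
    have h4 : ‖z - X‖ = dist X z := by rw [dist_eq_norm, ← norm_neg]; congr 1; abel
    rw [h4] at h2
    rw [div_le_iff₀ hW]
    linarith [h2]
  refine le_antisymm ((Metric.infDist_le_dist_of_mem hz₀).trans hdist) ?_
  by_contra hlt
  push_neg at hlt
  obtain ⟨zz, hzz, hltd⟩ := (Metric.infDist_lt_iff ⟨z₀, hz₀⟩).mp hlt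
  exact absurd hltd (not_lt.2 (hlow zz hzz))

/-- In the setup of Statement 6, with `p ∈ (1,∞]`, real dual exponent `q`,
and `λ = (r/R)(Σᵢ |1/√d + ā - aᵢ|^q)^{1/q}`, the ℓ_p distance from the point
`xᵢ = vᵢ + (aᵢ - λ) u` to the hyperplane `H = {z : ⟨w,z⟩ = 1}` equals exactly `r`. -/
theorem lp_dist_support_to_hyperplane (d : ℕ) (hd : 1 ≤ d)
    (p : ℝ≥0∞) [Fact (1 ≤ p)] (hp : 1 < p)
    (q : ℝ) (hq : 1 ≤ q) (hpq : 1 / p + 1 / ENNReal.ofReal q = 1)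
    (R r : ℝ) (hR : 0 < R) (hr : 0 < r)
    (a : Fin d → ℝ) (ha : ∀ i, a i ∈ Set.Icc (0 : ℝ) 1)
    (abar : ℝ) (habar : abar = (1 / (d : ℝ)) * ∑ i, a i)
    (lam : ℝ)
    (hlam : lam = (r / R) * (∑ i, |1 / Real.sqrt d + abar - a i| ^ q) ^ (1 / q))
    (halam : ∀ i, lam < a i)
    (v : Fin d → Fin d → ℝ) (hv : ∀ i j, v i j = if j = i then R else 0)
    (u : Fin d → ℝ) (hu : ∀ j, u j = R / Real.sqrt d)
    (w : Fin d → ℝ)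
    (hw : ∀ i, w i = 1 / R - (d : ℝ) * a i / (R * Real.sqrt d + (d : ℝ) * R * abar))
    (i : Fin d) :
    Metric.infDist
      ((WithLp.equiv p (Fin d → ℝ)).symm (fun j => v i j + (a i - lam) * u j))
      {z : PiLp p (fun _ : Fin d => ℝ) |
        ∑ j, w j * (WithLp.equiv p (Fin d → ℝ)) z j = 1} = r := by
  have hq0 : (0:ℝ) < q := lt_of_lt_of_le zero_lt_one hq
  have hd0 : (0:ℝ) < (d : ℝ) := by exact_mod_cast hd
  set sd := Real.sqrt (d : ℝ) with hsd_def
  have hsd : 0 < sd := Real.sqrt_pos.2 hd0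
  have hss : sd * sd = (d : ℝ) := Real.mul_self_sqrt hd0.le
  have habar0 : 0 ≤ abar := by
    rw [habar]
    exact mul_nonneg (by positivity) (Finset.sum_nonneg fun j _ => (ha j).1)
  set S : ℝ := sd + (d : ℝ) * abar with hS_def
  have hS : 0 < S := add_pos_of_pos_of_nonneg hsd (mul_nonneg hd0.le habar0)
  set cc : Fin d → ℝ := fun j => 1 / sd + abar - a j with hcc
  have hsa : ∑ j, a j = (d : ℝ) * abar := by rw [habar]; field_simp
  have hsumc : ∑ j, cc j = sd := by
    simp only [hcc]
    rw [Finset.sum_sub_distrib, Finset.sum_const, Finset.card_univ, Fintype.card_fin, hsa,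
      nsmul_eq_mul]
    field_simp
    linear_combination (-1 : ℝ) * hss
  have hdRS : 0 < (d : ℝ) / (R * S) := by positivity
  have hwc : ∀ j, w j = (d : ℝ) / (R * S) * cc j := by
    intro j
    rw [hw j, hcc, hS_def]
    field_simp
    ring_nf
    linear_combination hss
  have hC : 0 < ∑ j, |cc j| ^ q := by
    have hex : ∃ j, cc j ≠ 0 := by
      by_contra h
      push_neg at h
      have : ∑ j, cc j = 0 := by simp [h]
      rw [hsumc] at this
      exact hsd.ne' this
    obtain ⟨j, hj⟩ := hex
    exact Finset.sum_pos' (fun k _ => Real.rpow_nonneg (abs_nonneg _) _)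
      ⟨j, Finset.mem_univ j, Real.rpow_pos_of_pos (abs_pos.2 hj) _⟩
  set C : ℝ := (∑ j, |cc j| ^ q) ^ (1 / q) with hCdef
  have hCpos : 0 < C := Real.rpow_pos_of_pos hC _
  have hlamC : lam = (r / R) * C := hlam
  have hlam0 : 0 < lam := by rw [hlamC]; positivity
  have hsumw : ∑ j, w j = (d : ℝ) / (R * S) * sd := by
    rw [← hsumc, Finset.mul_sum]
    exact Finset.sum_congr rfl fun j _ => hwc j
  have hswx : ∑ j, w j * (v i j + (a i - lam) * u j) = 1 - (d : ℝ) * lam / S := by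
    have e1 : ∀ j, w j * (v i j + (a i - lam) * u j)
        = w j * v i j + (a i - lam) * (R / sd) * w j := by
      intro j; rw [hu j]; ring
    rw [Finset.sum_congr rfl fun j _ => e1 j, Finset.sum_add_distrib, ← Finset.mul_sum, hsumw]
    have e2 : ∑ j, w j * v i j = w i * R := by
      have : ∀ j, w j * v i j = if j = i then w j * R else 0 := by
        intro j; rw [hv i j]; split <;> simp
      rw [Finset.sum_congr rfl fun j _ => this j, Finset.sum_ite_eq' Finset.univ i
        (fun j => w j * R)]
      simp
    rw [e2, hwc i, hcc]
    field_simp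
    ring_nf
    linear_combination (-1 : ℝ) * hss
  have hTw : ∑ j, |w j| ^ q = ((d : ℝ) / (R * S)) ^ q * ∑ j, |cc j| ^ q := by
    rw [Finset.mul_sum]
    refine Finset.sum_congr rfl fun j _ => ?_
    rw [hwc j, abs_mul, abs_of_pos hdRS, Real.mul_rpow hdRS.le (abs_nonneg _)]
  have hT : 0 < ∑ j, |w j| ^ q := by
    rw [hTw]
    exact mul_pos (Real.rpow_pos_of_pos hdRS _) hC
  have hWq : (∑ j, |w j| ^ q) ^ (1 / q) = (d : ℝ) / (R * S) * C := by
    rw [hTw, Real.mul_rpow (Real.rpow_nonneg hdRS.le _)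
      (Finset.sum_nonneg fun k _ => Real.rpow_nonneg (abs_nonneg _) _), hCdef, one_div,
      Real.rpow_rpow_inv hdRS.le hq0.ne']
  have hx1 : ∑ j, w j * (v i j + (a i - lam) * u j) ≤ 1 := by
    rw [hswx]
    have : 0 < (d : ℝ) * lam / S := by positivity
    linarith
  rw [infDist_hyperplane hd p hp q hq hpq w _ hT hx1, hswx, hWq, hlamC]
  field_simp
  ring
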